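/- If a vector w ∈ ℂ^s satisfies M w = λ w where M = Δt·A + (Δt/(z−1))·e·b^T, and ζ := Δt/λ is such that 1/ζ is not an eigenvalue of A, then R(ζ) = z, where R(ζ) = 1 + ζ·b^T (I − ζA)^{−1} e is the stability function. -/

import Mathlib

open Matrix

/-- If `M w = λ w` with `M = Δt·A + (Δt/(z−1))·e bᵀ`, `w ≠ 0`, `λ ≠ 0`, and `1/ζ` (with
`ζ = Δt/λ`) is not an eigenvalue of `A`, then `R(ζ) = z` where
`R(ζ) = 1 + ζ bᵀ (I − ζA)⁻¹ e` is the stability function. -/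
theorem eigenvalue_of_M_gives_stability_function {s : ℕ}
    (A : Matrix (Fin s) (Fin s) ℂ) (b : Fin s → ℂ)
    (Δt : ℝ) (hΔt : 0 < Δt) (z : ℂ) (hz : z ≠ 1)
    (M : Matrix (Fin s) (Fin s) ℂ)
    (hM : M = (Δt : ℂ) • A + ((Δt : ℂ) / (z - 1)) • Matrix.vecMulVec (fun _ => 1) b)
    (lam : ℂ) (hlam : lam ≠ 0) (w : Fin s → ℂ) (hw : w ≠ 0)
    (heig : M.mulVec w = lam • w)
    (ζ : ℂ) (hζ : ζ = (Δt : ℂ) / lam)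
    (hnoteig : ∀ v : Fin s → ℂ, v ≠ 0 → A.mulVec v ≠ (1 / ζ) • v) :
    1 + ζ * (b ⬝ᵥ ((1 : Matrix (Fin s) (Fin s) ℂ) - ζ • A)⁻¹.mulVec (fun _ => 1)) = z := by
  have hΔt' : (Δt : ℂ) ≠ 0 := by exact_mod_cast (ne_of_gt hΔt)
  have hζ0 : ζ ≠ 0 := by rw [hζ]; exact div_ne_zero hΔt' hlam
  have hz1 : z - 1 ≠ 0 := sub_ne_zero.mpr hz
  set N : Matrix (Fin s) (Fin s) ℂ := (1 : Matrix (Fin s) (Fin s) ℂ) - ζ • A with hN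
  set e : Fin s → ℂ := fun _ => (1 : ℂ) with he
  -- N is invertible
  have hdet : N.det ≠ 0 := by
    intro h
    obtain ⟨v, hv0, hv⟩ := (Matrix.exists_mulVec_eq_zero_iff).mpr h
    apply hnoteig v hv0
    have hvA : v = ζ • A.mulVec v := by
      rw [← sub_eq_zero]
      simpa [hN, Matrix.sub_mulVec, Matrix.smul_mulVec, Matrix.one_mulVec] using hv
    funext i
    have h := congrFun hvA i
    simp only [Pi.smul_apply, smul_eq_mul] at h ⊢
    rw [h, one_div, inv_mul_cancel_left₀ hζ0]
  have hunit : IsUnit N.det := isUnit_iff_ne_zero.mpr hdet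
  -- key equation : N.mulVec w = c • e
  set c : ℂ := ζ / (z - 1) * (b ⬝ᵥ w) with hc
  have hvmv : (Matrix.vecMulVec e b).mulVec w = (b ⬝ᵥ w) • e := by
    funext i
    simp [Matrix.vecMulVec, Matrix.mulVec, dotProduct, he]
  have hkey : N.mulVec w = c • e := by
    have h1 : (Δt : ℂ) • A.mulVec w + ((Δt : ℂ) / (z - 1) * (b ⬝ᵥ w)) • e = lam • w := by
      rw [← heig, hM]
      simp [Matrix.add_mulVec, Matrix.smul_mulVec, hvmv, smul_smul]
    -- divide by lam
    have h2 : ζ • A.mulVec w + c • e = w := by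
      have h1' := congrArg (fun v => lam⁻¹ • v) h1
      simp only [smul_add, smul_smul, inv_mul_cancel₀ hlam, one_smul] at h1'
      have e1 : lam⁻¹ * (Δt : ℂ) = ζ := by rw [hζ]; field_simp
      have e2 : lam⁻¹ * ((Δt : ℂ) / (z - 1) * (b ⬝ᵥ w)) = c := by
        rw [hc, hζ]; field_simp
      rw [e1, e2] at h1'
      exact h1'
    rw [hN, Matrix.sub_mulVec, Matrix.one_mulVec, Matrix.smul_mulVec,
      sub_eq_iff_eq_add']
    exact h2.symm
  -- w = c • N⁻¹ e
  have hwc : w = c • N⁻¹.mulVec e := by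
    have := congrArg (fun v => N⁻¹.mulVec v) hkey
    simpa [Matrix.mulVec_mulVec, Matrix.nonsing_inv_mul N hunit,
      Matrix.one_mulVec, Matrix.mulVec_smul] using this
  have hbw : b ⬝ᵥ w ≠ 0 := by
    intro h0
    apply hw
    rw [hwc, hc, h0, mul_zero, zero_smul]
  have hbwe : b ⬝ᵥ w = c * (b ⬝ᵥ N⁻¹.mulVec e) := by
    rw [hwc]; simp [dotProduct_smul, smul_eq_mul]
  set d : ℂ := b ⬝ᵥ N⁻¹.mulVec e with hd
  have h' : (b ⬝ᵥ w) * (z - 1) = (b ⬝ᵥ w) * (ζ * d) := by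
    have h := hbwe
    rw [hc] at h
    field_simp at h
    linear_combination (b ⬝ᵥ w) * h
  have h2' := mul_left_cancel₀ hbw h'
  linear_combination -h2'
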